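/- Let p be an odd prime and α a positive integer. Then σ(p^α) is a power of 2 (i.e., σ(p^α) = 2^m for some positive integer m) if and only if p is a Mersenne prime (p = 2^r - 1 for some r ≥ 2) and α = 1. -/
import Mathlib

open Finset

lemma geom_factor (p k s : ℕ) :
    ∑ i ∈ range (k * s), p ^ i = (∑ i ∈ range k, p ^ i) * ∑ j ∈ range s, (p ^ k) ^ j := by
  induction s with
  | zero => simp
  | succ s ih =>
    rw [Nat.mul_succ, Finset.sum_range_add, ih, Finset.sum_range_succ, mul_add]
    congr 1
    rw [Finset.sum_mul]
    apply Finset.sum_congr rfl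
    intro i _
    rw [← pow_mul, ← pow_add, add_comm]

lemma geom_parity (p n : ℕ) (hodd : Odd p) :
    (∑ i ∈ range n, p ^ i) % 2 = n % 2 := by
  rw [Finset.sum_nat_mod]
  have : ∀ i ∈ range n, p ^ i % 2 = 1 := by
    intro i _
    exact Nat.odd_iff.mp (hodd.pow)
  rw [Finset.sum_congr rfl this]
  simp

theorem stmt0 (p α : ℕ) (hp : p.Prime) (hodd : Odd p) (hα : 0 < α) :
    (∃ m : ℕ, 0 < m ∧ ArithmeticFunction.sigma 1 (p ^ α) = 2 ^ m) ↔
      ((∃ r : ℕ, 2 ≤ r ∧ p = 2 ^ r - 1) ∧ α = 1) := by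
  have hp2 : 2 ≤ p := hp.two_le
  have hp3 : 3 ≤ p := by
    rcases Nat.lt_or_ge p 3 with h | h
    · interval_cases p
      exact absurd hodd (by decide)
    · exact h
  rw [ArithmeticFunction.sigma_one_apply_prime_pow hp]
  constructor
  · rintro ⟨m, hm, hσ⟩
    have h2m : (2:ℕ) ∣ 2 ^ m := dvd_pow_self 2 hm.ne'
    -- α + 1 is even
    have hpar : (α + 1) % 2 = 0 := by
      have := geom_parity p (α + 1) hodd
      rw [hσ] at this
      omega
    obtain ⟨s, hs⟩ : ∃ s, α + 1 = 2 * s := ⟨(α+1)/2, by omega⟩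
    have hs1 : 1 ≤ s := by omega
    rw [hs, geom_factor] at hσ
    have hS2 : ∑ i ∈ range 2, p ^ i = 1 + p := by simp [Finset.sum_range_succ]
    rw [hS2] at hσ
    have hTdvd : (∑ j ∈ range s, (p ^ 2) ^ j) ∣ 2 ^ m := ⟨1 + p, by rw [← hσ]; ring⟩
    -- s must be odd
    have hsodd : s % 2 = 1 := by
      by_contra hse
      obtain ⟨u, hu⟩ : ∃ u, s = 2 * u := ⟨s / 2, by omega⟩
      have hu1 : 1 ≤ u := by omega
      have hq : ∑ i ∈ range 2, (p ^ 2) ^ i = 1 + p ^ 2 := by simp [Finset.sum_range_succ]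
      have hqdvd : (1 + p ^ 2) ∣ 2 ^ m := by
        refine dvd_trans ?_ hTdvd
        rw [hu, geom_factor, hq]
        exact Dvd.intro _ rfl
      obtain ⟨t, ht, htq⟩ := (Nat.dvd_prime_pow Nat.prime_two).mp hqdvd
      have hp9 : 9 ≤ p ^ 2 := by nlinarith
      have hmod4 : (1 + p ^ 2) % 4 = 2 := by
        obtain ⟨c, hc⟩ := hodd
        have : p ^ 2 = 4 * (c * c + c) + 1 := by rw [hc]; ring
        omega
      have ht2 : 2 ≤ t := by
        by_contra h
        interval_cases t <;> norm_num at htq <;> omega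
      have h4 : (4:ℕ) ∣ 2 ^ t := by
        have : (2:ℕ) ^ 2 ∣ 2 ^ t := pow_dvd_pow 2 ht2
        simpa using this
      omega
    -- ∑ is odd and divides 2^m, so it equals 1
    have hTodd : (∑ j ∈ range s, (p ^ 2) ^ j) % 2 = 1 := by
      have := geom_parity (p ^ 2) s (hodd.pow)
      omega
    obtain ⟨t, ht, htT⟩ := (Nat.dvd_prime_pow Nat.prime_two).mp hTdvd
    have hT1 : (∑ j ∈ range s, (p ^ 2) ^ j) = 1 := by
      rcases Nat.eq_zero_or_pos t with h0 | h0
      · rw [htT, h0, pow_zero]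
      · exfalso
        have h2t : (2:ℕ) ∣ 2 ^ t := dvd_pow_self 2 h0.ne'
        omega
    have hs_eq : s = 1 := by
      by_contra h
      have hs2 : 2 ≤ s := by omega
      have : 1 + p ^ 2 ≤ ∑ j ∈ range s, (p ^ 2) ^ j := by
        calc 1 + p ^ 2 = ∑ j ∈ range 2, (p ^ 2) ^ j := by simp [Finset.sum_range_succ]
        _ ≤ _ := Finset.sum_le_sum_of_subset (Finset.range_subset_range.mpr hs2)
      nlinarith
    rw [hT1, mul_one] at hσ
    have hm2 : 2 ≤ m := by
      have h4 : (2:ℕ) ^ 2 ≤ 2 ^ m := by omega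
      exact (Nat.pow_le_pow_iff_right (by norm_num)).mp h4
    exact ⟨⟨m, hm2, by omega⟩, by omega⟩
  · rintro ⟨⟨r, hr, hpr⟩, hα1⟩
    refine ⟨r, by omega, ?_⟩
    subst hα1
    have h2r : 4 ≤ 2 ^ r := by
      calc (4:ℕ) = 2 ^ 2 := rfl
      _ ≤ 2 ^ r := Nat.pow_le_pow_right (by norm_num) hr
    simp [Finset.sum_range_succ, hpr]
    omega
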